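/- Let I = (𝔼, D, c, f) be a CMP instance whose objective f is of type sum, product, or bottleneck, and let E = {e_1,…,e_k} ⊆ 𝔼 be such that there exists an optimal solution S* of I with E ⊆ 𝔼 ∖ S*. Then l'(I,E) = sup{α ∈ ℝ : for every optimal solution S* of I there exists α⃗ = (α_1,…,α_k) with 0 ≤ α_l < maxdec(e_l) for all l and α = Σ_{l=1}^k α_l such that S* is optimal for I_{−α⃗,E}}, i.e., the new regular set lower tolerance coincides with the current regular set lower tolerance of E. -/
import Mathlib


open scoped ENNReal BigOperators

/-- Objective type of a combinatorial minimization problem: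
sum, product, or bottleneck. -/
inductive ObjType where
  | sum : ObjType
  | prod : ObjType
  | bottleneck : ObjType
deriving DecidableEq

/-- The cost `f_c(S)` of a feasible solution `S` under cost function `c`:
the sum, the product, or the maximum (for nonempty `S`) of the element costs. -/
noncomputable def objCost {ι : Type*} (t : ObjType) (c : ι → ℝ) (S : Finset ι) : ℝ :=
  match t with
  | ObjType.sum => ∑ e ∈ S, c e
  | ObjType.prod => ∏ e ∈ S, c e
  | ObjType.bottleneck => if h : S.Nonempty then S.sup' h c else 0

/-- The optimal objective value `f(I)` of the instance with feasible set `D`. -/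
noncomputable def optVal {ι : Type*} (t : ObjType) (c : ι → ℝ) (D : Finset (Finset ι)) : ℝ :=
  if h : D.Nonempty then D.inf' h (objCost t c) else 0

/-- `S` is an optimal solution of the instance `(𝔼, D, c, f)`. -/
def isOpt {ι : Type*} (t : ObjType) (c : ι → ℝ) (D : Finset (Finset ι)) (S : Finset ι) : Prop :=
  S ∈ D ∧ objCost t c S = optVal t c D

/-- `0 ≤ a < maxdec(e)`, where `maxdec(e) = ∞` for sum/bottleneck objectives and
`maxdec(e) = c(e)` for the product objective. -/
def decOK {ι : Type*} (t : ObjType) (c : ι → ℝ) (e : ι) (a : ℝ) : Prop :=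
  0 ≤ a ∧ (t = ObjType.prod → a < c e)

/-- Extended single upper tolerance
`u'(I,e) = sup {α ≥ 0 : every optimal solution of I is optimal for I_{α,e}}` valued in `[0,∞]`. -/
noncomputable def uTol {ι : Type*} [DecidableEq ι] (t : ObjType) (c : ι → ℝ)
    (D : Finset (Finset ι)) (e : ι) : ℝ≥0∞ :=
  sSup (ENNReal.ofReal '' {a : ℝ | 0 ≤ a ∧
    ∀ S : Finset ι, isOpt t c D S →
      isOpt t (fun x => if x = e then c x + a else c x) D S})

/-- Extended regular set upper tolerance `u'(I,E)`, valued in `[0,∞]`. -/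
noncomputable def uTolSet {ι : Type*} [DecidableEq ι] (t : ObjType) (c : ι → ℝ)
    (D : Finset (Finset ι)) (E : Finset ι) : ℝ≥0∞ :=
  sSup (ENNReal.ofReal '' {a : ℝ |
    ∀ S : Finset ι, isOpt t c D S →
      ∃ α : ι → ℝ, (∀ x, 0 ≤ α x) ∧ (∀ x ∉ E, α x = 0) ∧
        a = ∑ x ∈ E, α x ∧ isOpt t (fun x => c x + α x) D S})

/-- Extended reverse set upper tolerance `u_b'(I,E)`, valued in `[0,∞]` (`inf ∅ = ∞`). -/
noncomputable def uTolSetRev {ι : Type*} [DecidableEq ι] (t : ObjType) (c : ι → ℝ)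
    (D : Finset (Finset ι)) (E : Finset ι) : ℝ≥0∞ :=
  sInf (ENNReal.ofReal '' {a : ℝ |
    ∃ S : Finset ι, isOpt t c D S ∧
      ∃ α : ι → ℝ, (∀ x, 0 ≤ α x) ∧ (∀ x ∉ E, α x = 0) ∧
        a = ∑ x ∈ E, α x ∧ ¬ isOpt t (fun x => c x + α x) D S})

/-- New single lower tolerance
`l'(I,e) = sup {α : 0 ≤ α < maxdec(e), f(I_{−α,e}) = f(I)}`, valued in `[0,∞]`. -/
noncomputable def lTol {ι : Type*} [DecidableEq ι] (t : ObjType) (c : ι → ℝ)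
    (D : Finset (Finset ι)) (e : ι) : ℝ≥0∞ :=
  sSup (ENNReal.ofReal '' {a : ℝ | decOK t c e a ∧
    optVal t (fun x => if x = e then c x - a else c x) D = optVal t c D})

/-- New regular set lower tolerance `l'(I,E)`, valued in `[0,∞]`. -/
noncomputable def lTolSet {ι : Type*} [DecidableEq ι] (t : ObjType) (c : ι → ℝ)
    (D : Finset (Finset ι)) (E : Finset ι) : ℝ≥0∞ :=
  sSup (ENNReal.ofReal '' {a : ℝ |
    ∃ α : ι → ℝ, (∀ x ∈ E, decOK t c x (α x)) ∧ (∀ x ∉ E, α x = 0) ∧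
      a = ∑ x ∈ E, α x ∧ optVal t (fun x => c x - α x) D = optVal t c D})

/-- New reverse set lower tolerance `l_b'(I,E)`, valued in `[0,∞]` (`inf ∅ = ∞`). -/
noncomputable def lTolSetRev {ι : Type*} [DecidableEq ι] (t : ObjType) (c : ι → ℝ)
    (D : Finset (Finset ι)) (E : Finset ι) : ℝ≥0∞ :=
  sInf (ENNReal.ofReal '' {a : ℝ |
    ∃ α : ι → ℝ, (∀ x ∈ E, decOK t c x (α x)) ∧ (∀ x ∉ E, α x = 0) ∧
      a = ∑ x ∈ E, α x ∧ optVal t (fun x => c x - α x) D < optVal t c D})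


lemma objCost_congr {ι : Type*} (t : ObjType) (f g : ι → ℝ) (S : Finset ι)
    (h : ∀ x ∈ S, f x = g x) : objCost t f S = objCost t g S := by
  cases t with
  | sum => exact Finset.sum_congr rfl h
  | prod => exact Finset.prod_congr rfl h
  | bottleneck =>
      show (if h : S.Nonempty then S.sup' h f else 0) = (if h : S.Nonempty then S.sup' h g else 0)
      by_cases hS : S.Nonempty
      · rw [dif_pos hS, dif_pos hS]
        exact Finset.sup'_congr hS rfl h
      · rw [dif_neg hS, dif_neg hS]

lemma objCost_mono {ι : Type*} (t : ObjType) (f g : ι → ℝ) (S : Finset ι)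
    (h : ∀ x, g x ≤ f x) (hg : t = ObjType.prod → ∀ x, 0 ≤ g x) :
    objCost t g S ≤ objCost t f S := by
  cases t with
  | sum => exact Finset.sum_le_sum fun x _ => h x
  | prod => exact Finset.prod_le_prod (fun x _ => hg rfl x) (fun x _ => h x)
  | bottleneck =>
      show (if h : S.Nonempty then S.sup' h g else 0) ≤ (if h : S.Nonempty then S.sup' h f else 0)
      by_cases hS : S.Nonempty
      · rw [dif_pos hS, dif_pos hS]
        exact Finset.sup'_le _ _ fun x hx => le_trans (h x) (Finset.le_sup' f hx)
      · rw [dif_neg hS, dif_neg hS]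

lemma optVal_le {ι : Type*} (t : ObjType) (c : ι → ℝ) (D : Finset (Finset ι))
    (S : Finset ι) (hS : S ∈ D) : optVal t c D ≤ objCost t c S := by
  unfold optVal
  rw [dif_pos ⟨S, hS⟩]
  exact Finset.inf'_le _ hS

lemma exists_optVal_eq {ι : Type*} (t : ObjType) (c : ι → ℝ) (D : Finset (Finset ι))
    (hD : D.Nonempty) : ∃ S ∈ D, objCost t c S = optVal t c D := by
  unfold optVal
  rw [dif_pos hD]
  obtain ⟨S, hS, h⟩ := Finset.exists_mem_eq_inf' hD (objCost t c)
  exact ⟨S, hS, h.symm⟩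

/-- Theorem 4(b) (consistency): if some optimal solution is disjoint from `E`,
then the new regular set lower tolerance `l'(I,E)` coincides with the current
regular set lower tolerance. -/
theorem lrg_consistent {ι : Type*} [Fintype ι] [DecidableEq ι]
    (t : ObjType) (c : ι → ℝ) (D : Finset (Finset ι))
    (hD : D.Nonempty) (hSne : ∀ S ∈ D, S.Nonempty)
    (hpos : t = ObjType.prod → ∀ x, 0 < c x)
    (E : Finset ι) (hE : E.Nonempty)
    (hout : ∃ S : Finset ι, isOpt t c D S ∧ ∀ x ∈ E, x ∉ S) :
    lTolSet t c D E =
      sSup (ENNReal.ofReal '' {a : ℝ |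
        ∀ S : Finset ι, isOpt t c D S →
          ∃ α : ι → ℝ, (∀ x ∈ E, decOK t c x (α x)) ∧ (∀ x ∉ E, α x = 0) ∧
            a = ∑ x ∈ E, α x ∧ isOpt t (fun x => c x - α x) D S}) := by
  unfold lTolSet
  have hset : {a : ℝ |
      ∃ α : ι → ℝ, (∀ x ∈ E, decOK t c x (α x)) ∧ (∀ x ∉ E, α x = 0) ∧
        a = ∑ x ∈ E, α x ∧ optVal t (fun x => c x - α x) D = optVal t c D} =
      {a : ℝ |
      ∀ S : Finset ι, isOpt t c D S →
        ∃ α : ι → ℝ, (∀ x ∈ E, decOK t c x (α x)) ∧ (∀ x ∉ E, α x = 0) ∧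
          a = ∑ x ∈ E, α x ∧ isOpt t (fun x => c x - α x) D S} := by
    ext a
    simp only [Set.mem_setOf_eq]
    constructor
    · rintro ⟨α, hdec, hzero, hsum, hval⟩ S hS
      refine ⟨α, hdec, hzero, hsum, hS.1, ?_⟩
      have hα0 : ∀ x, 0 ≤ α x := by
        intro x
        by_cases hx : x ∈ E
        · exact (hdec x hx).1
        · rw [hzero x hx]
      have hle : objCost t (fun x => c x - α x) S ≤ objCost t c S := by
        refine objCost_mono t c _ S (fun x => by linarith [hα0 x]) ?_
        intro ht x
        by_cases hx : x ∈ E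
        · linarith [(hdec x hx).2 ht]
        · rw [hzero x hx]; linarith [hpos ht x]
      have h1 : optVal t (fun x => c x - α x) D ≤ objCost t (fun x => c x - α x) S :=
        optVal_le _ _ _ _ hS.1
      rw [hval] at h1
      rw [hS.2] at hle
      rw [hval]; linarith
    · rintro hall
      obtain ⟨Sstar, hSopt, hdisj⟩ := hout
      obtain ⟨α, hdec, hzero, hsum, hopt⟩ := hall Sstar hSopt
      refine ⟨α, hdec, hzero, hsum, ?_⟩
      have hcongr : objCost t (fun x => c x - α x) Sstar = objCost t c Sstar := by
        refine objCost_congr t _ c Sstar fun x hx => ?_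
        have : x ∉ E := fun h => hdisj x h hx
        rw [hzero x this]; ring
      rw [← hopt.2, hcongr, hSopt.2]

  rw [hset]
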